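/- The O-chase is hereditary: for every O-chase derivation D from a factbase F and a ruleset 𝓡 and every F′ ⊆ F, the restriction D|F′ of D induced by F′ is an O-chase derivation from F′ and 𝓡. -/

import Mathlib

/-! # A framework for existential rules and the chase

Terms are constants, ordinary variables, or *nulls* (fresh existential variables).
The null `XTerm.null bodyEnc headEnc z key` is the fresh variable `z_{(R,π)}`
canonically determined by the trigger `(R,π)` (encoded by the rule's body and head
and by the restriction of `π` to the terms of the body) and by the existential
variable `z` of the head. -/

inductive XTerm : Type
  | const : ℕ → XTerm
  | var : ℕ → XTerm
  | null : List (ℕ × List XTerm) → List (ℕ × List XTerm) → XTerm →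
      List (XTerm × XTerm) → XTerm

/-- variables (including nulls) are the non-constant terms -/
def XTerm.isVar : XTerm → Prop
  | .const _ => False
  | _ => True

/-- an atom: a predicate together with its list of arguments -/
structure XAtom where
  pred : ℕ
  args : List XTerm

/-- an existential rule, given by its (finite) body and head -/
structure XRule where
  body : List XAtom
  head : List XAtom

/-- a trigger `(R,π)` -/
structure Trigger where
  rule : XRule
  π : XTerm → XTerm

def applyAtom (σ : XTerm → XTerm) (a : XAtom) : XAtom := ⟨a.pred, a.args.map σ⟩

def applySet (σ : XTerm → XTerm) (S : Set XAtom) : Set XAtom := applyAtom σ '' S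

/-- a substitution leaves constants unchanged -/
def constPreserving (σ : XTerm → XTerm) : Prop :=
  ∀ c, σ (XTerm.const c) = XTerm.const c

/-- `σ` is a homomorphism from the set of atoms `A` to the set of atoms `B` -/
def isHom (σ : XTerm → XTerm) (A B : Set XAtom) : Prop :=
  constPreserving σ ∧ applySet σ A ⊆ B

/-- the variables occurring in a finite set (list) of atoms -/
def listVars (l : List XAtom) : Set XTerm := {t | t.isVar ∧ ∃ a ∈ l, t ∈ a.args}

def XRule.bodySet (R : XRule) : Set XAtom := {a | a ∈ R.body}
def XRule.headSet (R : XRule) : Set XAtom := {a | a ∈ R.head}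

/-- the frontier of a rule: the variables shared by its body and head -/
def XRule.frontier (R : XRule) : Set XTerm := listVars R.body ∩ listVars R.head

/-- the existential variables of a rule: variables of the head not in the body -/
def XRule.existVars (R : XRule) : Set XTerm := listVars R.head \ listVars R.body

/-- canonical encoding of the relevant part of a trigger's substitution -/
def trigKey (R : XRule) (π : XTerm → XTerm) : List (XTerm × XTerm) :=
  (R.body.flatMap XAtom.args).map (fun t => (t, π t))

open Classical in
/-- the safe extension `π^s` of `π`: it maps each existential variable `z` of the
head to the fresh variable `z_{(R,π)}` determined by the trigger, and is `π`
elsewhere -/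
noncomputable def safeExt (R : XRule) (π : XTerm → XTerm) : XTerm → XTerm := fun t =>
  if t ∈ R.existVars then
    XTerm.null (R.body.map fun a => (a.pred, a.args))
      (R.head.map fun a => (a.pred, a.args)) t (trigKey R π)
  else π t

/-- two triggers are the same when they have the same rule and their substitutions
agree on the body (the domain of the substitution of a trigger) -/
def TrigEquiv (T T' : Trigger) : Prop :=
  T.rule = T'.rule ∧ ∀ t ∈ T.rule.body.flatMap XAtom.args, T.π t = T'.π t

/-- A (possibly infinite) derivation `D₀ = (∅,∅,F₀), D₁ = (R₁,π₁,F₁), …` from a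
factbase `F` and a ruleset `𝓡`:  `tr i` is the trigger of the element `Dᵢ`
(defined for `1 ≤ i ≤` length) and `facts i` is its factbase `Fᵢ`; each `Fᵢ`
(`i ≥ 1`) is the immediate derivation from `Fᵢ₋₁` through `(Rᵢ,πᵢ)`, and all the
triggers are pairwise distinct. -/
structure ChaseDerivation (𝓡 : Set XRule) (F : Set XAtom) where
  tr : ℕ → Option Trigger
  facts : ℕ → Set XAtom
  tr_zero : tr 0 = none
  facts_zero : facts 0 = F
  step_some : ∀ i T, tr (i+1) = some T →
    T.rule ∈ 𝓡 ∧ isHom T.π T.rule.bodySet (facts i) ∧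
    facts (i+1) = facts i ∪ applySet (safeExt T.rule T.π) T.rule.headSet
  step_none : ∀ i, tr (i+1) = none → facts (i+1) = facts i
  closed : ∀ i, tr (i+2) ≠ none → tr (i+1) ≠ none
  distinct : ∀ i j T T', tr i = some T → tr j = some T' → i ≠ j → ¬ TrigEquiv T T'

namespace Chase

variable {𝓡 : Set XRule} {F G : Set XAtom}

/-- the set of atoms produced by the `i`-th element of the derivation -/
noncomputable def producedAt (D : ChaseDerivation 𝓡 F) (i : ℕ) : Set XAtom :=
  match D.tr i with
  | some T => applySet (safeExt T.rule T.π) T.rule.headSet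
  | none => ∅

def listMax (l : List ℕ) : ℕ := l.foldr max 0

open Classical in
noncomputable def rankStep (D : ChaseDerivation 𝓡 F) (prev : XAtom → ℕ) (A : XAtom) : ℕ :=
  if A ∈ D.facts 0 then 0
  else if h : ∃ i, A ∈ producedAt D i then
    match D.tr (Nat.find h) with
    | some T => 1 + listMax ((T.rule.body.map (applyAtom T.π)).map prev)
    | none => 0
  else 0

noncomputable def rankFuel (D : ChaseDerivation 𝓡 F) : ℕ → XAtom → ℕ
  | 0 => fun _ => 0
  | n+1 => rankStep D (rankFuel D n)

open Classical in
/-- the index of the first trigger of the derivation producing a given atom -/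
noncomputable def firstProd (D : ChaseDerivation 𝓡 F) (A : XAtom) : ℕ :=
  if h : ∃ i, A ∈ producedAt D i then Nat.find h else 0

/-- the rank of an atom in a derivation: `0` for the atoms of `F₀`, and otherwise
`1 +` the maximal rank of the atoms of `π(B)`, where `(R,π)` (with `R = (B,H)`)
is the first trigger of the derivation such that `A ∈ π^s(H)` -/
noncomputable def rank (D : ChaseDerivation 𝓡 F) (A : XAtom) : ℕ :=
  rankFuel D (firstProd D A + 1) A

/-- the rank of a trigger `(R,π)`: `1 +` the maximal rank of the atoms of `π(B)` -/
noncomputable def trigRank (D : ChaseDerivation 𝓡 F) (T : Trigger) : ℕ :=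
  1 + listMax ((T.rule.body.map (applyAtom T.π)).map (rank D))

/-- all atoms appearing in a derivation -/
def allAtoms (D : ChaseDerivation 𝓡 F) : Set XAtom := ⋃ i, D.facts i

/-- the derivation has depth (maximal rank of an atom) at most `k` -/
def depthAtMost (D : ChaseDerivation 𝓡 F) (k : ℕ) : Prop :=
  ∀ A ∈ allAtoms D, rank D A ≤ k

/-- the derivation has depth at least `k` -/
def depthAtLeast (D : ChaseDerivation 𝓡 F) (k : ℕ) : Prop :=
  ∃ A ∈ allAtoms D, k ≤ rank D A

/-- O-applicability of a trigger on the subderivation `D₀,…,Dᵢ`: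
its substitution is a homomorphism from the body to `Fᵢ` -/
def AppO (D : ChaseDerivation 𝓡 F) (i : ℕ) (T : Trigger) : Prop :=
  T.rule ∈ 𝓡 ∧ isHom T.π T.rule.bodySet (D.facts i)

def frontierAgree (R : XRule) (π π' : XTerm → XTerm) : Prop :=
  ∀ t ∈ R.frontier, π t = π' t

/-- SO-applicability on `D₀,…,Dᵢ`: moreover no trigger of the subderivation has the
same rule with a substitution agreeing on the frontier -/
def AppSO (D : ChaseDerivation 𝓡 F) (i : ℕ) (T : Trigger) : Prop :=
  AppO D i T ∧ ∀ j T', j ≤ i → D.tr j = some T' →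
    ¬ (T'.rule = T.rule ∧ frontierAgree T.rule T.π T'.π)

/-- R-applicability on `D₀,…,Dᵢ`: moreover `π` cannot be extended to a homomorphism
from `B ∪ H` to `Fᵢ` -/
def AppR (D : ChaseDerivation 𝓡 F) (i : ℕ) (T : Trigger) : Prop :=
  AppO D i T ∧ ¬ ∃ σ : XTerm → XTerm,
    isHom σ (T.rule.bodySet ∪ T.rule.headSet) (D.facts i) ∧
    ∀ t ∈ listVars T.rule.body, σ t = T.π t

/-- logical equivalence of two sets of atoms: each maps to the other by homomorphism -/
def logEquiv (A B : Set XAtom) : Prop := (∃ σ, isHom σ A B) ∧ (∃ σ, isHom σ B A)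

/-- E-applicability on `D₀,…,Dᵢ`: moreover `Fᵢ ∪ π^s(H)` is not logically
equivalent to `Fᵢ` -/
def AppE (D : ChaseDerivation 𝓡 F) (i : ℕ) (T : Trigger) : Prop :=
  AppO D i T ∧
  ¬ logEquiv (D.facts i ∪ applySet (safeExt T.rule T.π) T.rule.headSet) (D.facts i)

/-- an O-chase derivation is any derivation -/
def OChase (_D : ChaseDerivation 𝓡 F) : Prop := True

/-- an SO-chase derivation: every trigger is SO-applicable on the preceding
subderivation -/
def SOChase (D : ChaseDerivation 𝓡 F) : Prop := ∀ i T, D.tr (i+1) = some T → AppSO D i T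

/-- an R-chase derivation: every trigger is R-applicable on the preceding
subderivation -/
def RChase (D : ChaseDerivation 𝓡 F) : Prop := ∀ i T, D.tr (i+1) = some T → AppR D i T

/-- rank compatibility: triggers appear in order of non-decreasing rank -/
def RankCompatible (D : ChaseDerivation 𝓡 F) : Prop :=
  ∀ i j T T', D.tr i = some T → D.tr j = some T' → i ≤ j →
    trigRank D T ≤ trigRank D T'

/-- rank exhaustiveness (w.r.t. an applicability criterion `App`): for every rank
`k` of a trigger of the derivation, if `Dᵢ` is the last element whose trigger has
rank `k` then every trigger `App`-applicable on `D₀,…,Dᵢ` has rank `k+1` -/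
def RankExhaustive (App : ChaseDerivation 𝓡 F → ℕ → Trigger → Prop)
    (D : ChaseDerivation 𝓡 F) : Prop :=
  ∀ i T, D.tr i = some T →
    (∀ j T', i < j → D.tr j = some T' → trigRank D T' ≠ trigRank D T) →
    ∀ T', App D i T' → trigRank D T' = trigRank D T + 1

/-- breadth-first derivation (w.r.t. an applicability criterion) -/
def BreadthFirst (App : ChaseDerivation 𝓡 F → ℕ → Trigger → Prop)
    (D : ChaseDerivation 𝓡 F) : Prop :=
  RankCompatible D ∧ RankExhaustive App D

/-- an E-chase derivation: an E-breadth-first derivation in which every trigger is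
E-applicable on the preceding subderivation -/
def EChase (D : ChaseDerivation 𝓡 F) : Prop :=
  BreadthFirst AppE D ∧ ∀ i T, D.tr (i+1) = some T → AppE D i T

/-- exhaustiveness: for every `i` and every trigger applicable on `D₀,…,Dᵢ` there is
`k ≥ i` such that either `D_k = (R,π,F_k)` or the trigger is not applicable on
`D₀,…,D_k` -/
def Exhaustive (App : ChaseDerivation 𝓡 F → ℕ → Trigger → Prop)
    (D : ChaseDerivation 𝓡 F) : Prop :=
  ∀ i T, App D i T →
    ∃ k, i ≤ k ∧ ((∃ T', D.tr k = some T' ∧ TrigEquiv T T') ∨ ¬ App D k T)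

/-- the derivation is finite -/
def IsFiniteDeriv (D : ChaseDerivation 𝓡 F) : Prop := ∃ n, ∀ m, n ≤ m → D.tr m = none

/-- a terminating derivation: exhaustive and finite -/
def Terminating (App : ChaseDerivation 𝓡 F → ℕ → Trigger → Prop)
    (D : ChaseDerivation 𝓡 F) : Prop :=
  Exhaustive App D ∧ IsFiniteDeriv D

/-- `D'` is a subderivation of `D`: its sequence of triggers is a subsequence of
that of `D` -/
def IsSubderivation (D' : ChaseDerivation 𝓡 G) (D : ChaseDerivation 𝓡 F) : Prop :=
  ∃ φ : ℕ → ℕ, StrictMono φ ∧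
    ∀ i T, D'.tr (i+1) = some T → ∃ T', D.tr (φ i + 1) = some T' ∧ TrigEquiv T T'

/-- `D'` is the restriction of `D` induced by `G`: the maximal derivation from `G`
and `𝓡` whose sequence of triggers is a subsequence of that of `D` -/
def IsRestriction (D : ChaseDerivation 𝓡 F) (G : Set XAtom) (D' : ChaseDerivation 𝓡 G) : Prop :=
  IsSubderivation D' D ∧
  ∀ D'' : ChaseDerivation 𝓡 G, IsSubderivation D'' D → IsSubderivation D'' D'

/-- `A'` is a direct ancestor of `A` in `D`: for some element `Dᵢ = (Rᵢ,πᵢ,Fᵢ)` of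
`D`, `A' ∈ πᵢ(Bᵢ)` and `A ∈ Fᵢ \ Fᵢ₋₁` -/
def DirectAnc (D : ChaseDerivation 𝓡 F) (A' A : XAtom) : Prop :=
  ∃ i T, D.tr (i+1) = some T ∧ A' ∈ applySet T.π T.rule.bodySet ∧
    A ∈ D.facts (i+1) ∧ A ∉ D.facts i

/-- the set of ancestors of an atom: the transitive closure of the direct-ancestor
relation -/
def Anc (D : ChaseDerivation 𝓡 F) (A : XAtom) : Set XAtom :=
  {A' | Relation.TransGen (DirectAnc D) A' A}

/-- the ancestors of a trigger `(R,π)`: the atoms of `π(B)` together with the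
ancestors of these atoms -/
def TrigAnc (D : ChaseDerivation 𝓡 F) (T : Trigger) : Set XAtom :=
  applySet T.π T.rule.bodySet ∪ ⋃ A ∈ applySet T.π T.rule.bodySet, Anc D A

end Chase

open Chase

section Hereditary

attribute [local instance] Classical.propDecidable

variable {𝓡 : Set XRule} {F : Set XAtom}

lemma trigEquiv_refl (T : Trigger) : TrigEquiv T T := ⟨rfl, fun _ _ => rfl⟩

lemma applySet_congr {R : XRule} {σ σ' : XTerm → XTerm}
    (h : ∀ t ∈ R.body.flatMap XAtom.args, σ t = σ' t) :
    applySet σ R.bodySet = applySet σ' R.bodySet := by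
  unfold applySet
  apply Set.image_congr
  intro a ha
  unfold applyAtom
  congr 1
  apply List.map_congr_left
  intro t ht
  exact h t (List.mem_flatMap.mpr ⟨a, ha, ht⟩)

lemma safeExt_congr {R : XRule} {σ σ' : XTerm → XTerm}
    (hc : constPreserving σ) (hc' : constPreserving σ')
    (h : ∀ t ∈ R.body.flatMap XAtom.args, σ t = σ' t) :
    applySet (safeExt R σ) R.headSet = applySet (safeExt R σ') R.headSet := by
  unfold applySet
  apply Set.image_congr
  intro a ha
  unfold applyAtom
  congr 1
  apply List.map_congr_left
  intro t ht
  unfold safeExt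
  by_cases hex : t ∈ R.existVars
  · simp only [hex, if_pos]
    congr 1
    unfold trigKey
    apply List.map_congr_left
    intro u hu
    simpa using h u hu
  · simp only [hex, if_neg, if_false]
    cases t with
    | const c => rw [hc, hc']
    | var v =>
        have hvar : XTerm.isVar (XTerm.var v) := by trivial
        have hhead : (XTerm.var v) ∈ listVars R.head := ⟨hvar, a, ha, ht⟩
        have hbody : (XTerm.var v) ∈ listVars R.body := by
          by_contra hb
          exact hex ⟨hhead, hb⟩
        obtain ⟨_, b, hb, htb⟩ := hbody
        exact h _ (List.mem_flatMap.mpr ⟨b, hb, htb⟩)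
    | null w x y z =>
        have hvar : XTerm.isVar (XTerm.null w x y z) := by trivial
        have hhead : (XTerm.null w x y z) ∈ listVars R.head := ⟨hvar, a, ha, ht⟩
        have hbody : (XTerm.null w x y z) ∈ listVars R.body := by
          by_contra hb
          exact hex ⟨hhead, hb⟩
        obtain ⟨_, b, hb, htb⟩ := hbody
        exact h _ (List.mem_flatMap.mpr ⟨b, hb, htb⟩)

/-- the greedy fact bases over the indices of `D`, starting from `F'` -/
noncomputable def hG (D : ChaseDerivation 𝓡 F) (F' : Set XAtom) : ℕ → Set XAtom
  | 0 => F'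
  | i+1 =>
    match D.tr (i+1) with
    | some T =>
        if isHom T.π T.rule.bodySet (hG D F' i) then
          hG D F' i ∪ applySet (safeExt T.rule T.π) T.rule.headSet
        else hG D F' i
    | none => hG D F' i

/-- the indices of `D` kept by the greedy restriction -/
def kept (D : ChaseDerivation 𝓡 F) (F' : Set XAtom) (i : ℕ) : Prop :=
  ∃ T, D.tr (i+1) = some T ∧ isHom T.π T.rule.bodySet (hG D F' i)

lemma hG_succ_some {D : ChaseDerivation 𝓡 F} {F' : Set XAtom} {i : ℕ} {T : Trigger}
    (h : D.tr (i+1) = some T) (hh : isHom T.π T.rule.bodySet (hG D F' i)) :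
    hG D F' (i+1) = hG D F' i ∪ applySet (safeExt T.rule T.π) T.rule.headSet := by
  simp [hG, h, hh]

lemma hG_succ_eq {D : ChaseDerivation 𝓡 F} {F' : Set XAtom} {i : ℕ}
    (h : ¬ kept D F' i) : hG D F' (i+1) = hG D F' i := by
  cases htr : D.tr (i+1) with
  | none => simp [hG, htr]
  | some T =>
      have : ¬ isHom T.π T.rule.bodySet (hG D F' i) := fun hh => h ⟨T, htr, hh⟩
      simp [hG, htr, this]

lemma hG_mono {D : ChaseDerivation 𝓡 F} {F' : Set XAtom} : Monotone (hG D F') := by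
  apply monotone_nat_of_le_succ
  intro i
  by_cases h : kept D F' i
  · obtain ⟨T, htr, hh⟩ := h
    rw [hG_succ_some htr hh]; exact Set.subset_union_left
  · rw [hG_succ_eq h]

lemma hG_const {D : ChaseDerivation 𝓡 F} {F' : Set XAtom} {a : ℕ} :
    ∀ b, a ≤ b → (∀ k, a ≤ k → k < b → ¬ kept D F' k) → hG D F' b = hG D F' a := by
  intro b
  induction b with
  | zero =>
      intro hab _
      have : a = 0 := by omega
      rw [this]
  | succ n ih =>
      intro hab hk
      rcases Nat.lt_or_ge a (n+1) with h | h
      · have han : a ≤ n := by omega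
        rw [hG_succ_eq (hk n han (by omega))]
        exact ih han (fun k h1 h2 => hk k h1 (by omega))
      · have : a = n+1 := by omega
        rw [this]

/-- the count of kept indices strictly below `j` -/
noncomputable def hcnt (D : ChaseDerivation 𝓡 F) (F' : Set XAtom) : ℕ → ℕ
  | 0 => 0
  | j+1 => hcnt D F' j + if kept D F' j then 1 else 0

lemma hcnt_mono {D : ChaseDerivation 𝓡 F} {F' : Set XAtom} : Monotone (hcnt D F') := by
  apply monotone_nat_of_le_succ
  intro j
  simp only [hcnt]
  omega

lemma hcnt_lt {D : ChaseDerivation 𝓡 F} {F' : Set XAtom} {a b : ℕ}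
    (h : kept D F' a) (hab : a < b) : hcnt D F' a < hcnt D F' b := by
  have h1 : hcnt D F' (a+1) = hcnt D F' a + 1 := by simp [hcnt, h]
  have := hcnt_mono (F := F) (D := D) (F' := F') (show a+1 ≤ b by omega)
  omega

lemma hcnt_const {D : ChaseDerivation 𝓡 F} {F' : Set XAtom} {a : ℕ} :
    ∀ b, a ≤ b → (∀ k, a ≤ k → k < b → ¬ kept D F' k) → hcnt D F' b = hcnt D F' a := by
  intro b
  induction b with
  | zero =>
      intro hab _
      have : a = 0 := by omega
      rw [this]
  | succ n ih =>
      intro hab hk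
      rcases Nat.lt_or_ge a (n+1) with h | h
      · have han : a ≤ n := by omega
        have : hcnt D F' (n+1) = hcnt D F' n := by
          simp [hcnt, hk n han (by omega)]
        rw [this]
        exact ih han (fun k h1 h2 => hk k h1 (by omega))
      · have : a = n+1 := by omega
        rw [this]

/-- enumeration of the kept indices, in increasing order -/
noncomputable def hidx (D : ChaseDerivation 𝓡 F) (F' : Set XAtom) : ℕ → Option ℕ
  | 0 => if h : ∃ j, kept D F' j then some (Nat.find h) else none
  | n+1 =>
    match hidx D F' n with
    | some j => if h : ∃ j', kept D F' j' ∧ j < j' then some (Nat.find h) else none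
    | none => none

lemma hidx_zero_some {D : ChaseDerivation 𝓡 F} {F' : Set XAtom} {j : ℕ}
    (h : hidx D F' 0 = some j) : kept D F' j ∧ ∀ k, k < j → ¬ kept D F' k := by
  by_cases he : ∃ j, kept D F' j
  · simp only [hidx, dif_pos he] at h
    obtain rfl : Nat.find he = j := by injection h
    exact ⟨Nat.find_spec he, fun k hk => Nat.find_min he hk⟩
  · simp [hidx, dif_neg he] at h

lemma hidx_succ_some {D : ChaseDerivation 𝓡 F} {F' : Set XAtom} {n j : ℕ}
    (h : hidx D F' (n+1) = some j) :
    ∃ j₀, hidx D F' n = some j₀ ∧ kept D F' j ∧ j₀ < j ∧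
      ∀ k, j₀ < k → k < j → ¬ kept D F' k := by
  cases hn : hidx D F' n with
  | none => simp [hidx, hn] at h
  | some j₀ =>
      refine ⟨j₀, rfl, ?_⟩
      by_cases he : ∃ j', kept D F' j' ∧ j₀ < j'
      · simp only [hidx, hn, dif_pos he] at h
        obtain rfl : Nat.find he = j := by injection h
        refine ⟨(Nat.find_spec he).1, (Nat.find_spec he).2, ?_⟩
        intro k h1 h2 hk
        exact Nat.find_min he h2 ⟨hk, h1⟩
      · simp [hidx, hn, dif_neg he] at h

lemma hidx_some_kept {D : ChaseDerivation 𝓡 F} {F' : Set XAtom} {n j : ℕ}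
    (h : hidx D F' n = some j) : kept D F' j := by
  cases n with
  | zero => exact (hidx_zero_some h).1
  | succ m => obtain ⟨_, _, hk, _⟩ := hidx_succ_some h; exact hk

lemma hidx_lt {D : ChaseDerivation 𝓡 F} {F' : Set XAtom} :
    ∀ {m n a b : ℕ}, n < m → hidx D F' n = some a → hidx D F' m = some b → a < b := by
  intro m
  induction m with
  | zero => intro n a b h; omega
  | succ k ih =>
      intro n a b hnm hn hm
      obtain ⟨c, hc, _, hcb, _⟩ := hidx_succ_some hm
      rcases Nat.lt_or_ge n k with h | h
      · exact lt_trans (ih h hn hc) hcb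
      · have : n = k := by omega
        subst this
        rw [hn] at hc
        obtain rfl : a = c := by injection hc
        exact hcb

/-- every kept index is enumerated, at position its kept-count -/
lemma hidx_hcnt {D : ChaseDerivation 𝓡 F} {F' : Set XAtom} :
    ∀ j, kept D F' j → hidx D F' (hcnt D F' j) = some j := by
  intro j
  induction j using Nat.strong_induction_on with
  | _ j ih =>
      intro hj
      by_cases hk : ∃ k, k < j ∧ kept D F' k
      · -- take the greatest kept index below j
        obtain ⟨k, hkj, hkk, hmax⟩ : ∃ k, k < j ∧ kept D F' k ∧
            ∀ k', k < k' → k' < j → ¬ kept D F' k' := by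
          obtain ⟨k0, hk0j, hk0⟩ := hk
          set k := Nat.findGreatest (kept D F' ·) (j-1) with hkdef
          have hkspec : kept D F' k :=
            Nat.findGreatest_spec (m := k0) (by omega) hk0
          have hkle : k ≤ j - 1 := Nat.findGreatest_le _
          refine ⟨k, by omega, hkspec, ?_⟩
          intro k' h1 h2 hk'
          exact absurd hk' (Nat.findGreatest_is_greatest h1 (by omega))
        have hcj : hcnt D F' j = hcnt D F' k + 1 := by
          have h1 : hcnt D F' (k+1) = hcnt D F' k + 1 := by simp [hcnt, hkk]
          have h2 : hcnt D F' j = hcnt D F' (k+1) := by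
            apply hcnt_const _ (by omega)
            intro x hx1 hx2
            exact hmax x (by omega) hx2
          omega
        have hik : hidx D F' (hcnt D F' k) = some k := ih k hkj hkk
        have he : ∃ j', kept D F' j' ∧ k < j' := ⟨j, hj, hkj⟩
        have hfind : Nat.find he = j := by
          have h1 : Nat.find he ≤ j := Nat.find_le ⟨hj, hkj⟩
          have h2 := Nat.find_spec he
          by_contra hne
          exact hmax _ h2.2 (by omega) h2.1
        rw [hcj]
        simp only [hidx, hik, dif_pos he, hfind]
      · push_neg at hk
        have hcj : hcnt D F' j = 0 := by
          have := hcnt_const (D := D) (F' := F') j (Nat.zero_le j)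
            (fun x _ hx => hk x hx)
          simpa [hcnt] using this
        have he : ∃ j', kept D F' j' := ⟨j, hj⟩
        have hfind : Nat.find he = j := by
          have h1 : Nat.find he ≤ j := Nat.find_le hj
          have h2 := Nat.find_spec he
          by_contra hne
          exact hk _ (by omega) h2
        rw [hcj]
        simp only [hidx, dif_pos he, hfind]

/-- the triggers of the restriction -/
noncomputable def rtr (D : ChaseDerivation 𝓡 F) (F' : Set XAtom) : ℕ → Option Trigger
  | 0 => none
  | n+1 =>
    match hidx D F' n with
    | some j => D.tr (j+1)
    | none => none

/-- the fact bases of the restriction -/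
noncomputable def rfacts (D : ChaseDerivation 𝓡 F) (F' : Set XAtom) : ℕ → Set XAtom
  | 0 => F'
  | n+1 =>
    match hidx D F' n with
    | some j => hG D F' (j+1)
    | none => rfacts D F' n

lemma rfacts_eq {D : ChaseDerivation 𝓡 F} {F' : Set XAtom} {n j : ℕ}
    (h : hidx D F' n = some j) : rfacts D F' n = hG D F' j := by
  cases n with
  | zero =>
      obtain ⟨_, hnone⟩ := hidx_zero_some h
      have : hG D F' j = hG D F' 0 :=
        hG_const j (Nat.zero_le j) (fun k _ hk => hnone k hk)
      simp [rfacts, this, hG]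
  | succ m =>
      obtain ⟨j₀, hj₀, _, hlt, hgap⟩ := hidx_succ_some h
      have : hG D F' j = hG D F' (j₀+1) :=
        hG_const j (by omega) (fun k h1 h2 => hgap k (by omega) h2)
      simp [rfacts, hj₀, this]

/-- the greedy restriction of `D` induced by `F'` -/
noncomputable def restrDeriv (D : ChaseDerivation 𝓡 F) (F' : Set XAtom) :
    ChaseDerivation 𝓡 F' where
  tr := rtr D F'
  facts := rfacts D F'
  tr_zero := rfl
  facts_zero := rfl
  step_some := by
    intro i T h
    cases hi : hidx D F' i with
    | none => simp [rtr, hi] at h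
    | some j =>
        simp only [rtr, hi] at h
        obtain ⟨T₀, htr₀, hhom₀⟩ := hidx_some_kept hi
        rw [h] at htr₀
        have hTT : T₀ = T := (Option.some.inj htr₀).symm
        rw [hTT] at hhom₀
        obtain ⟨hrule, _, _⟩ := D.step_some j T h
        have hfe : rfacts D F' i = hG D F' j := rfacts_eq hi
        refine ⟨hrule, by rw [hfe]; exact hhom₀, ?_⟩
        have : rfacts D F' (i+1) = hG D F' (j+1) := by simp [rfacts, hi]
        rw [this, hG_succ_some h hhom₀, hfe]
  step_none := by
    intro i h
    cases hi : hidx D F' i with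
    | none => simp [rfacts, hi]
    | some j =>
        simp only [rtr, hi] at h
        obtain ⟨T₀, htr₀, _⟩ := hidx_some_kept hi
        rw [h] at htr₀
        exact absurd htr₀ (by simp)
  closed := by
    intro i h
    cases hi : hidx D F' (i+1) with
    | none => simp [rtr, hi] at h
    | some j =>
        obtain ⟨j₀, hj₀, _, _, _⟩ := hidx_succ_some hi
        obtain ⟨T₀, htr₀, _⟩ := hidx_some_kept hj₀
        simp [rtr, hj₀, htr₀]
  distinct := by
    intro i j T T' hi hj hij
    cases i with
    | zero => simp [rtr] at hi
    | succ n =>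
        cases j with
        | zero => simp [rtr] at hj
        | succ m =>
            cases hn : hidx D F' n with
            | none => simp [rtr, hn] at hi
            | some a =>
                cases hm : hidx D F' m with
                | none => simp [rtr, hm] at hj
                | some b =>
                    simp only [rtr, hn] at hi
                    simp only [rtr, hm] at hj
                    have hab : a ≠ b := by
                      intro hE
                      subst hE
                      rcases Nat.lt_or_ge n m with h | h
                      · exact absurd (hidx_lt h hn hm) (by omega)
                      · have : m < n := by omega
                        exact absurd (hidx_lt this hm hn) (by omega)
                    exact D.distinct (a+1) (b+1) T T' hi hj (by omega)

/-- the embedding of the restriction into `D` -/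
noncomputable def rφ (D : ChaseDerivation 𝓡 F) (F' : Set XAtom) : ℕ → ℕ
  | 0 => (hidx D F' 0).getD 0
  | n+1 =>
    match hidx D F' (n+1) with
    | some j => j
    | none => rφ D F' n + 1

lemma rφ_eq {D : ChaseDerivation 𝓡 F} {F' : Set XAtom} {n j : ℕ}
    (h : hidx D F' n = some j) : rφ D F' n = j := by
  cases n with
  | zero => simp [rφ, h]
  | succ m => simp [rφ, h]

lemma rφ_mono {D : ChaseDerivation 𝓡 F} {F' : Set XAtom} : StrictMono (rφ D F') := by
  apply strictMono_nat_of_lt_succ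
  intro n
  cases hn : hidx D F' (n+1) with
  | none => simp [rφ, hn]
  | some j =>
      obtain ⟨j₀, hj₀, _, hlt, _⟩ := hidx_succ_some hn
      rw [rφ_eq hj₀, rφ_eq hn]
      exact hlt

lemma restr_subderiv (D : ChaseDerivation 𝓡 F) (F' : Set XAtom) :
    IsSubderivation (restrDeriv D F') D := by
  refine ⟨rφ D F', rφ_mono, ?_⟩
  intro i T h
  cases hi : hidx D F' i with
  | none =>
      simp only [restrDeriv, rtr, hi] at h
      exact absurd h (by simp)
  | some j =>
      simp only [restrDeriv, rtr, hi] at h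
      rw [rφ_eq hi]
      exact ⟨T, h, trigEquiv_refl T⟩

/-- the embedding of a subderivation of `D` from `F'` into the greedy restriction -/
noncomputable def rψ (D : ChaseDerivation 𝓡 F) (F' : Set XAtom) {G : Set XAtom}
    (D'' : ChaseDerivation 𝓡 G) (φ : ℕ → ℕ) : ℕ → ℕ
  | 0 => if D''.tr 1 = none then 0 else hcnt D F' (φ 0)
  | i+1 => if D''.tr (i+2) = none then rψ D F' D'' φ i + 1 else hcnt D F' (φ (i+1))

lemma rψ_eq {D : ChaseDerivation 𝓡 F} {F' : Set XAtom} {G : Set XAtom}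
    {D'' : ChaseDerivation 𝓡 G} {φ : ℕ → ℕ} {i : ℕ}
    (h : D''.tr (i+1) ≠ none) : rψ D F' D'' φ i = hcnt D F' (φ i) := by
  cases i with
  | zero => simp [rψ, h]
  | succ m => simp [rψ, h]

end Hereditary

/-- the O-chase is hereditary. -/
theorem O_chase_hereditary (𝓡 : Set XRule) (F : Set XAtom) (hF : F.Finite)
    (D : ChaseDerivation 𝓡 F) (hD : OChase D) (F' : Set XAtom) (hsub : F' ⊆ F) :
    (∃ D' : ChaseDerivation 𝓡 F', IsRestriction D F' D') ∧
    ∀ D' : ChaseDerivation 𝓡 F', IsRestriction D F' D' → OChase D' := by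
  classical
  refine ⟨⟨restrDeriv D F', restr_subderiv D F', ?_⟩, fun _ _ => trivial⟩
  rintro D'' ⟨φ'', hφm, hφt⟩
  -- the key lemma: the fact bases of any subderivation from `F'` are included
  -- in the greedy fact bases, and all its triggers are kept by the greedy choice
  have core : ∀ i T, D''.tr (i+1) = some T → D''.facts i ⊆ hG D F' (φ'' i) →
      kept D F' (φ'' i) ∧ D''.facts (i+1) ⊆ hG D F' (φ'' i + 1) := by
    intro i T hT hsubf
    obtain ⟨T_D, hTD, hrule, hagree⟩ := hφt i T hT
    obtain ⟨hrl'', hhom'', hfacts''⟩ := D''.step_some i T hT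
    obtain ⟨hrlD, hhomD, _⟩ := D.step_some (φ'' i) T_D hTD
    have hbodyeq : applySet T_D.π T_D.rule.bodySet = applySet T.π T.rule.bodySet := by
      rw [← hrule]
      exact applySet_congr (fun t ht => (hagree t ht).symm)
    have hhomG : isHom T_D.π T_D.rule.bodySet (hG D F' (φ'' i)) := by
      refine ⟨hhomD.1, ?_⟩
      rw [hbodyeq]
      exact hhom''.2.trans hsubf
    have houteq : applySet (safeExt T.rule T.π) T.rule.headSet =
        applySet (safeExt T_D.rule T_D.π) T_D.rule.headSet := by
      have h1 := safeExt_congr (R := T.rule) hhom''.1 hhomD.1 hagree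
      rw [h1, hrule]
    refine ⟨⟨T_D, hTD, hhomG⟩, ?_⟩
    rw [hG_succ_some hTD hhomG, hfacts'', ← houteq]
    exact Set.union_subset_union hsubf (subset_refl _)
  have key : ∀ i, D''.facts i ⊆ hG D F' (φ'' i) := by
    intro i
    induction i with
    | zero =>
        rw [D''.facts_zero]
        have h0 : hG D F' 0 = F' := rfl
        rw [← h0]
        exact hG_mono (Nat.zero_le _)
    | succ n ih =>
        have hle : φ'' n + 1 ≤ φ'' (n+1) := hφm (Nat.lt_succ_self n)
        cases hT : D''.tr (n+1) with
        | none =>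
            rw [D''.step_none n hT]
            exact ih.trans (hG_mono (by omega))
        | some T =>
            exact (core n T hT ih).2.trans (hG_mono hle)
  have hkept : ∀ i T, D''.tr (i+1) = some T → kept D F' (φ'' i) :=
    fun i T h => (core i T h (key i)).1
  refine ⟨rψ D F' D'' φ'', ?_, ?_⟩
  · apply strictMono_nat_of_lt_succ
    intro i
    by_cases h : D''.tr (i+2) = none
    · have : rψ D F' D'' φ'' (i+1) = rψ D F' D'' φ'' i + 1 := by simp [rψ, h]
      omega
    · have h1 : D''.tr (i+1) ≠ none := D''.closed i h
      obtain ⟨T, hT⟩ := Option.ne_none_iff_exists'.mp h1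
      have e1 : rψ D F' D'' φ'' (i+1) = hcnt D F' (φ'' (i+1)) := by simp [rψ, h]
      have e2 : rψ D F' D'' φ'' i = hcnt D F' (φ'' i) := rψ_eq h1
      rw [e1, e2]
      exact hcnt_lt (hkept i T hT) (hφm (Nat.lt_succ_self i))
  · intro i T hT
    have hne : D''.tr (i+1) ≠ none := by rw [hT]; simp
    have e : rψ D F' D'' φ'' i = hcnt D F' (φ'' i) := rψ_eq hne
    have hk := hkept i T hT
    have hid : hidx D F' (hcnt D F' (φ'' i)) = some (φ'' i) := hidx_hcnt _ hk
    obtain ⟨T_D, hTD, hequiv⟩ := hφt i T hT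
    refine ⟨T_D, ?_, hequiv⟩
    show rtr D F' (rψ D F' D'' φ'' i + 1) = some T_D
    rw [e]
    simp [rtr, hid, hTD]
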